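/- arXiv:1811.03113 — 4 statements merged into one kernel-verified Lean document; each statement's English description precedes it below -/
import Mathlib

section
/- Von Neumann entropy is subadditive: for any density matrix ρ on ℂ^n ⊗ ℂ^m with reduced density matrices ρ₁ = Tr₂ ρ and ρ₂ = Tr₁ ρ, one has S(ρ) ≤ S(ρ₁) + S(ρ₂). -/
open scoped Kronecker ComplexOrder

/-- A density matrix: positive semidefinite with trace 1. -/
def IsDensityMatrix {d : Type*} [Fintype d] (ρ : Matrix d d ℂ) : Prop :=
  ρ.PosSemidef ∧ ρ.trace = 1

/-- The rank-one outer product `|ψ⟩⟨ψ|` of a vector. -/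
noncomputable def outerProd {d : Type*} (ψ : d → ℂ) : Matrix d d ℂ :=
  Matrix.vecMulVec ψ (star ψ)

/-- Partial trace over the second tensor factor. -/
noncomputable def ptrace₂ {α β : Type*} [Fintype β] (σ : Matrix (α × β) (α × β) ℂ) :
    Matrix α α ℂ :=
  Matrix.of fun i i' => ∑ j, σ (i, j) (i', j)

/-- Partial trace over the first tensor factor. -/
noncomputable def ptrace₁ {α β : Type*} [Fintype α] (σ : Matrix (α × β) (α × β) ℂ) :
    Matrix β β ℂ :=
  Matrix.of fun j j' => ∑ i, σ (i, j) (i, j')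

/-- Von Neumann entropy `S(ρ) = -∑ λᵢ log λᵢ` over the eigenvalues of `ρ`. -/
noncomputable def vnEntropy {d : Type*} [Fintype d] [DecidableEq d] (ρ : Matrix d d ℂ) : ℝ :=
  if h : ρ.IsHermitian then ∑ i, Real.negMulLog (h.eigenvalues i) else 0

section Aux

open Matrix Finset

/-- Classical subadditivity of Shannon entropy. -/
private lemma classical_subadd {ι κ : Type*} [Fintype ι] [Fintype κ]
    (p : ι × κ → ℝ) (hp : ∀ x, 0 ≤ p x) (hsum : ∑ x, p x = 1) :
    ∑ x, Real.negMulLog (p x) ≤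
      (∑ i, Real.negMulLog (∑ j, p (i, j))) + ∑ j, Real.negMulLog (∑ i, p (i, j)) := by
  set a : ι → ℝ := fun i => ∑ j, p (i, j) with ha
  set b : κ → ℝ := fun j => ∑ i, p (i, j) with hb
  have ha0 : ∀ i, 0 ≤ a i := fun i => Finset.sum_nonneg fun j _ => hp _
  have hb0 : ∀ j, 0 ≤ b j := fun j => Finset.sum_nonneg fun i _ => hp _
  have hsa : ∑ i, a i = 1 := by rw [← hsum, ← Fintype.sum_prod_type]
  have hsb : ∑ j, b j = 1 := by rw [← hsum, Fintype.sum_prod_type]; exact Finset.sum_comm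
  have key : ∀ x : ι × κ, p x - a x.1 * b x.2 ≤
      p x * Real.log (p x) - p x * Real.log (a x.1) - p x * Real.log (b x.2) := by
    intro x
    rcases eq_or_lt_of_le (hp x) with h0 | h0
    · rw [← h0]
      simp only [zero_sub, zero_mul, sub_zero, sub_self, zero_sub, neg_nonpos]
      simpa using mul_nonneg (ha0 x.1) (hb0 x.2)
    · have hpa : p x ≤ a x.1 := by
        have := Finset.single_le_sum (f := fun j => p (x.1, j)) (fun j _ => hp _)
          (Finset.mem_univ x.2)
        simpa using this
      have hpb : p x ≤ b x.2 := by
        have := Finset.single_le_sum (f := fun i => p (i, x.2)) (fun i _ => hp _)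
          (Finset.mem_univ x.1)
        simpa using this
      have ha' : 0 < a x.1 := lt_of_lt_of_le h0 hpa
      have hb' : 0 < b x.2 := lt_of_lt_of_le h0 hpb
      have hlog := Real.log_le_sub_one_of_pos (show 0 < a x.1 * b x.2 / p x by positivity)
      rw [Real.log_div (by positivity) (ne_of_gt h0), Real.log_mul (ne_of_gt ha') (ne_of_gt hb')]
        at hlog
      have h2 := mul_le_mul_of_nonneg_left hlog (le_of_lt h0)
      have h3 : p x * (a x.1 * b x.2 / p x) = a x.1 * b x.2 := by field_simp
      nlinarith [h2, h3]
  have hkey : (0 : ℝ) ≤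
      ∑ x : ι × κ, (p x * Real.log (p x) - p x * Real.log (a x.1) - p x * Real.log (b x.2)) := by
    have h1 : ∑ x : ι × κ, (p x - a x.1 * b x.2) = 0 := by
      rw [Finset.sum_sub_distrib, hsum]
      have : ∑ x : ι × κ, a x.1 * b x.2 = (∑ i, a i) * (∑ j, b j) := by
        rw [Fintype.sum_prod_type, Finset.sum_mul_sum]
      rw [this, hsa, hsb]; ring
    rw [← h1]
    exact Finset.sum_le_sum fun x _ => key x
  have e1 : ∑ i, Real.negMulLog (a i) = ∑ x : ι × κ, (- (p x * Real.log (a x.1))) := by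
    rw [Fintype.sum_prod_type]
    refine Finset.sum_congr rfl fun i _ => ?_
    simp only [Real.negMulLog, ha, Finset.sum_mul, neg_mul]
    rw [Finset.sum_neg_distrib]
  have e2 : ∑ j, Real.negMulLog (b j) = ∑ x : ι × κ, (- (p x * Real.log (b x.2))) := by
    rw [Fintype.sum_prod_type, Finset.sum_comm]
    refine Finset.sum_congr rfl fun j _ => ?_
    simp only [Real.negMulLog, hb, Finset.sum_mul, neg_mul]
    rw [Finset.sum_neg_distrib]
  have e3 : ∑ x : ι × κ, Real.negMulLog (p x) = ∑ x : ι × κ, (- (p x * Real.log (p x))) := by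
    refine Finset.sum_congr rfl fun x _ => ?_
    simp [Real.negMulLog]
  rw [e1, e2, e3]
  have expand : (∑ x : ι × κ, -(p x * Real.log (a x.1))) + (∑ x : ι × κ, -(p x * Real.log (b x.2)))
      - ∑ x : ι × κ, -(p x * Real.log (p x)) =
      ∑ x : ι × κ, (p x * Real.log (p x) - p x * Real.log (a x.1) - p x * Real.log (b x.2)) := by
    rw [← Finset.sum_add_distrib, ← Finset.sum_sub_distrib]
    exact Finset.sum_congr rfl fun x _ => by ring
  linarith [hkey, expand]

/-- Dephasing in an arbitrary basis increases entropy (via Jensen). -/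
private lemma dephase {ι κ : Type*} [Fintype ι] [Fintype κ] (B : ι → κ → ℝ) (lam : κ → ℝ)
    (hB : ∀ x k, 0 ≤ B x k) (hrow : ∀ x, ∑ k, B x k = 1) (hcol : ∀ k, ∑ x, B x k = 1)
    (hlam : ∀ k, 0 ≤ lam k) :
    ∑ k, Real.negMulLog (lam k) ≤ ∑ x, Real.negMulLog (∑ k, B x k * lam k) := by
  have jensen : ∀ x, ∑ k, B x k • Real.negMulLog (lam k) ≤
      Real.negMulLog (∑ k, B x k • lam k) :=
    fun x => Real.concaveOn_negMulLog.le_map_sum (fun k _ => hB x k) (hrow x)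
      (fun k _ => hlam k)
  calc ∑ k, Real.negMulLog (lam k)
      = ∑ x, ∑ k, B x k • Real.negMulLog (lam k) := by
        rw [Finset.sum_comm]
        refine Finset.sum_congr rfl fun k _ => ?_
        simp only [smul_eq_mul, ← Finset.sum_mul, hcol k, one_mul]
    _ ≤ ∑ x, Real.negMulLog (∑ k, B x k • lam k) := Finset.sum_le_sum fun x _ => jensen x
    _ = ∑ x, Real.negMulLog (∑ k, B x k * lam k) := by simp [smul_eq_mul]

private lemma conj_entry {d e : Type*} [Fintype d] [Fintype e] (A : Matrix d e ℂ)
    (ρ : Matrix d d ℂ) (x y : e) :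
    (Aᴴ * ρ * A) x y = ∑ s, ∑ t, star (A s x) * ρ s t * A t y := by
  rw [Matrix.mul_apply, Finset.sum_comm]
  refine Finset.sum_congr rfl fun t _ => ?_
  rw [Matrix.mul_apply, Finset.sum_mul]
  exact Finset.sum_congr rfl fun s _ => by rw [Matrix.conjTranspose_apply]

private lemma ptrace₂_conj {n m : ℕ} (ρ : Matrix (Fin n × Fin m) (Fin n × Fin m) ℂ)
    (U₁ : Matrix (Fin n) (Fin n) ℂ) (U₂ : Matrix (Fin m) (Fin m) ℂ)
    (hU₂ : U₂ * U₂ᴴ = 1) :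
    ptrace₂ ((U₁ ⊗ₖ U₂)ᴴ * ρ * (U₁ ⊗ₖ U₂)) = U₁ᴴ * ptrace₂ ρ * U₁ := by
  have delta : ∀ l l' : Fin m, ∑ j, star (U₂ l j) * U₂ l' j = if l' = l then 1 else 0 := by
    intro l l'
    have h : (U₂ * U₂ᴴ) l' l = (1 : Matrix (Fin m) (Fin m) ℂ) l' l := by rw [hU₂]
    rw [Matrix.mul_apply] at h
    simp only [Matrix.conjTranspose_apply, Matrix.one_apply] at h
    rw [← h]
    exact Finset.sum_congr rfl fun j _ => by ring
  ext i i'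
  show ∑ j, ((U₁ ⊗ₖ U₂)ᴴ * ρ * (U₁ ⊗ₖ U₂)) (i, j) (i', j) = (U₁ᴴ * ptrace₂ ρ * U₁) i i'
  calc ∑ j, ((U₁ ⊗ₖ U₂)ᴴ * ρ * (U₁ ⊗ₖ U₂)) (i, j) (i', j)
      = ∑ j, ∑ s, ∑ t, star ((U₁ ⊗ₖ U₂) s (i, j)) * ρ s t * (U₁ ⊗ₖ U₂) t (i', j) := by
        exact Finset.sum_congr rfl fun j _ => conj_entry _ _ _ _
    _ = ∑ s, ∑ t, ∑ j, star ((U₁ ⊗ₖ U₂) s (i, j)) * ρ s t * (U₁ ⊗ₖ U₂) t (i', j) := by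
        rw [Finset.sum_comm]
        exact Finset.sum_congr rfl fun s _ => Finset.sum_comm
    _ = ∑ s, ∑ t, star (U₁ s.1 i) * ρ s t * U₁ t.1 i' * (if t.2 = s.2 then 1 else 0) := by
        refine Finset.sum_congr rfl fun s _ => Finset.sum_congr rfl fun t _ => ?_
        rw [← delta s.2 t.2, Finset.mul_sum]
        refine Finset.sum_congr rfl fun j _ => ?_
        simp only [kroneckerMap_apply, star_mul']
        ring
    _ = ∑ s, ∑ k', star (U₁ s.1 i) * ρ s (k', s.2) * U₁ k' i' := by
        refine Finset.sum_congr rfl fun s _ => ?_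
        rw [Fintype.sum_prod_type]
        refine Finset.sum_congr rfl fun k' _ => ?_
        simp [mul_ite, mul_one, mul_zero, Finset.sum_ite_eq']
    _ = ∑ k, ∑ k', star (U₁ k i) * (∑ l, ρ (k, l) (k', l)) * U₁ k' i' := by
        rw [Fintype.sum_prod_type]
        refine Finset.sum_congr rfl fun k _ => ?_
        rw [Finset.sum_comm]
        refine Finset.sum_congr rfl fun k' _ => ?_
        rw [Finset.mul_sum, Finset.sum_mul]
    _ = (U₁ᴴ * ptrace₂ ρ * U₁) i i' := by
        rw [conj_entry]
        exact Finset.sum_congr rfl fun k _ => Finset.sum_congr rfl fun k' _ => rfl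

private lemma ptrace₁_conj {n m : ℕ} (ρ : Matrix (Fin n × Fin m) (Fin n × Fin m) ℂ)
    (U₁ : Matrix (Fin n) (Fin n) ℂ) (U₂ : Matrix (Fin m) (Fin m) ℂ)
    (hU₁ : U₁ * U₁ᴴ = 1) :
    ptrace₁ ((U₁ ⊗ₖ U₂)ᴴ * ρ * (U₁ ⊗ₖ U₂)) = U₂ᴴ * ptrace₁ ρ * U₂ := by
  have delta : ∀ l l' : Fin n, ∑ j, star (U₁ l j) * U₁ l' j = if l' = l then 1 else 0 := by
    intro l l'
    have h : (U₁ * U₁ᴴ) l' l = (1 : Matrix (Fin n) (Fin n) ℂ) l' l := by rw [hU₁]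
    rw [Matrix.mul_apply] at h
    simp only [Matrix.conjTranspose_apply, Matrix.one_apply] at h
    rw [← h]
    exact Finset.sum_congr rfl fun j _ => by ring
  ext i i'
  show ∑ j, ((U₁ ⊗ₖ U₂)ᴴ * ρ * (U₁ ⊗ₖ U₂)) (j, i) (j, i') = (U₂ᴴ * ptrace₁ ρ * U₂) i i'
  calc ∑ j, ((U₁ ⊗ₖ U₂)ᴴ * ρ * (U₁ ⊗ₖ U₂)) (j, i) (j, i')
      = ∑ j, ∑ s, ∑ t, star ((U₁ ⊗ₖ U₂) s (j, i)) * ρ s t * (U₁ ⊗ₖ U₂) t (j, i') := by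
        exact Finset.sum_congr rfl fun j _ => conj_entry _ _ _ _
    _ = ∑ s, ∑ t, ∑ j, star ((U₁ ⊗ₖ U₂) s (j, i)) * ρ s t * (U₁ ⊗ₖ U₂) t (j, i') := by
        rw [Finset.sum_comm]
        exact Finset.sum_congr rfl fun s _ => Finset.sum_comm
    _ = ∑ s, ∑ t, star (U₂ s.2 i) * ρ s t * U₂ t.2 i' * (if t.1 = s.1 then 1 else 0) := by
        refine Finset.sum_congr rfl fun s _ => Finset.sum_congr rfl fun t _ => ?_
        rw [← delta s.1 t.1, Finset.mul_sum]
        refine Finset.sum_congr rfl fun j _ => ?_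
        simp only [kroneckerMap_apply, star_mul']
        ring
    _ = ∑ s, ∑ l', star (U₂ s.2 i) * ρ s (s.1, l') * U₂ l' i' := by
        refine Finset.sum_congr rfl fun s _ => ?_
        rw [Fintype.sum_prod_type, Finset.sum_comm]
        refine Finset.sum_congr rfl fun l' _ => ?_
        simp [mul_ite, mul_one, mul_zero, Finset.sum_ite_eq']
    _ = ∑ l, ∑ l', star (U₂ l i) * (∑ k, ρ (k, l) (k, l')) * U₂ l' i' := by
        rw [Fintype.sum_prod_type, Finset.sum_comm]
        refine Finset.sum_congr rfl fun l _ => ?_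
        rw [Finset.sum_comm]
        refine Finset.sum_congr rfl fun l' _ => ?_
        rw [Finset.mul_sum, Finset.sum_mul]
    _ = (U₂ᴴ * ptrace₁ ρ * U₂) i i' := by
        rw [conj_entry]
        exact Finset.sum_congr rfl fun l _ => Finset.sum_congr rfl fun l' _ => rfl

private lemma kron_conjTranspose {n m : ℕ} (A : Matrix (Fin n) (Fin n) ℂ)
    (B : Matrix (Fin m) (Fin m) ℂ) : (A ⊗ₖ B)ᴴ = Aᴴ ⊗ₖ Bᴴ := by
  ext x y
  simp only [Matrix.conjTranspose_apply, kroneckerMap_apply, star_mul']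

/-- Subadditivity of von Neumann entropy: `S(ρ) ≤ S(ρ₁) + S(ρ₂)` for the two
reduced density matrices of a bipartite density matrix `ρ`. -/
theorem vnEntropy_subadditive {n m : ℕ}
    (ρ : Matrix (Fin n × Fin m) (Fin n × Fin m) ℂ) (hρ : IsDensityMatrix ρ) :
    vnEntropy ρ ≤ vnEntropy (ptrace₂ ρ) + vnEntropy (ptrace₁ ρ) := by
  classical
  obtain ⟨hpsd, htr⟩ := hρ
  have hH : ρ.IsHermitian := hpsd.1
  have h₁ : (ptrace₂ ρ).IsHermitian := by
    ext i i'
    simp only [Matrix.conjTranspose_apply, ptrace₂, Matrix.of_apply, star_sum]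
    exact Finset.sum_congr rfl fun j _ => by
      rw [← Matrix.conjTranspose_apply, hH.eq]
  have h₂ : (ptrace₁ ρ).IsHermitian := by
    ext j j'
    simp only [Matrix.conjTranspose_apply, ptrace₁, Matrix.of_apply, star_sum]
    exact Finset.sum_congr rfl fun i _ => by
      rw [← Matrix.conjTranspose_apply, hH.eq]
  set lam := hH.eigenvalues with hlam
  set W : Matrix (Fin n × Fin m) (Fin n × Fin m) ℂ := hH.eigenvectorUnitary.1 with hW
  set U₁ : Matrix (Fin n) (Fin n) ℂ := h₁.eigenvectorUnitary.1 with hU₁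
  set U₂ : Matrix (Fin m) (Fin m) ℂ := h₂.eigenvectorUnitary.1 with hU₂
  have hW1 : Wᴴ * W = 1 := by
    rw [← Matrix.star_eq_conjTranspose]; exact Matrix.UnitaryGroup.star_mul_self _
  have hW2 : W * Wᴴ = 1 := by
    rw [← Matrix.star_eq_conjTranspose]
    exact Matrix.mem_unitaryGroup_iff.mp hH.eigenvectorUnitary.2
  have hU₁1 : U₁ᴴ * U₁ = 1 := by
    rw [← Matrix.star_eq_conjTranspose]; exact Matrix.UnitaryGroup.star_mul_self _
  have hU₁2 : U₁ * U₁ᴴ = 1 := by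
    rw [← Matrix.star_eq_conjTranspose]
    exact Matrix.mem_unitaryGroup_iff.mp h₁.eigenvectorUnitary.2
  have hU₂1 : U₂ᴴ * U₂ = 1 := by
    rw [← Matrix.star_eq_conjTranspose]; exact Matrix.UnitaryGroup.star_mul_self _
  have hU₂2 : U₂ * U₂ᴴ = 1 := by
    rw [← Matrix.star_eq_conjTranspose]
    exact Matrix.mem_unitaryGroup_iff.mp h₂.eigenvectorUnitary.2
  set V : Matrix (Fin n × Fin m) (Fin n × Fin m) ℂ := U₁ ⊗ₖ U₂ with hV
  have hV1 : Vᴴ * V = 1 := by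
    rw [hV, kron_conjTranspose, ← Matrix.mul_kronecker_mul, hU₁1, hU₂1,
      Matrix.one_kronecker_one]
  have hV2 : V * Vᴴ = 1 := by
    rw [hV, kron_conjTranspose, ← Matrix.mul_kronecker_mul, hU₁2, hU₂2,
      Matrix.one_kronecker_one]
  set M : Matrix (Fin n × Fin m) (Fin n × Fin m) ℂ := Vᴴ * W with hM
  have hM1 : Mᴴ * M = 1 := by
    rw [hM, Matrix.conjTranspose_mul, Matrix.conjTranspose_conjTranspose]
    calc Wᴴ * V * (Vᴴ * W) = Wᴴ * (V * Vᴴ) * W := by noncomm_ring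
      _ = 1 := by rw [hV2, mul_one, hW1]
  have hM2 : M * Mᴴ = 1 := by
    rw [hM, Matrix.conjTranspose_mul, Matrix.conjTranspose_conjTranspose]
    calc Vᴴ * W * (Wᴴ * V) = Vᴴ * (W * Wᴴ) * V := by noncomm_ring
      _ = 1 := by rw [hW2, mul_one, hV1]
  set B : (Fin n × Fin m) → (Fin n × Fin m) → ℝ := fun x k => Complex.normSq (M x k) with hB
  have hB0 : ∀ x k, 0 ≤ B x k := fun x k => Complex.normSq_nonneg _
  have hrow : ∀ x, ∑ k, B x k = 1 := by
    intro x
    have h : (M * Mᴴ) x x = 1 := by rw [hM2]; simp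
    rw [Matrix.mul_apply] at h
    simp only [Matrix.conjTranspose_apply] at h
    have : ((∑ k, B x k : ℝ) : ℂ) = 1 := by
      push_cast
      rw [← h]
      exact Finset.sum_congr rfl fun k _ => by
        simp [hB, Complex.star_def, Complex.mul_conj]
    exact_mod_cast this
  have hcol : ∀ k, ∑ x, B x k = 1 := by
    intro k
    have h : (Mᴴ * M) k k = 1 := by rw [hM1]; simp
    rw [Matrix.mul_apply] at h
    simp only [Matrix.conjTranspose_apply] at h
    have : ((∑ x, B x k : ℝ) : ℂ) = 1 := by
      push_cast
      rw [← h]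
      exact Finset.sum_congr rfl fun x _ => by
        simp [hB, Complex.star_def, mul_comm, Complex.mul_conj]
    exact_mod_cast this
  have hlam0 : ∀ k, 0 ≤ lam k := fun k => hpsd.eigenvalues_nonneg k
  set p : (Fin n × Fin m) → ℝ := fun x => ∑ k, B x k * lam k with hp
  have hp0 : ∀ x, 0 ≤ p x := fun x =>
    Finset.sum_nonneg fun k _ => mul_nonneg (hB0 x k) (hlam0 k)
  -- the diagonal of V† ρ V is given by p
  have hdiag : ∀ x, (Vᴴ * ρ * V) x x = (p x : ℂ) := by
    intro x
    have hspec : ρ = W * Matrix.diagonal (RCLike.ofReal ∘ lam) * Wᴴ := by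
      rw [← Matrix.star_eq_conjTranspose]
      exact hH.spectral_theorem
    have : Vᴴ * ρ * V = M * Matrix.diagonal (RCLike.ofReal ∘ lam) * Mᴴ := by
      rw [hspec, hM, Matrix.conjTranspose_mul, Matrix.conjTranspose_conjTranspose]
      noncomm_ring
    have hpx : (p x : ℂ) = ∑ k, (B x k : ℂ) * (lam k : ℂ) := by
      rw [hp]; push_cast; rfl
    rw [this, Matrix.mul_apply, hpx]
    refine Finset.sum_congr rfl fun k _ => ?_
    simp only [Matrix.mul_diagonal, Matrix.conjTranspose_apply, Function.comp_apply, hB,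
      Complex.star_def]
    rw [mul_comm (M x k), mul_assoc, Complex.mul_conj]
    norm_num [RCLike.ofReal]
    ring
  -- marginals of p are eigenvalues of the reduced matrices
  have hmarg₁ : ∀ i, ∑ j, p (i, j) = h₁.eigenvalues i := by
    intro i
    have hc : ((∑ j, p (i, j) : ℝ) : ℂ) = ((h₁.eigenvalues i : ℝ) : ℂ) := by
      push_cast
      calc ∑ j, (p (i, j) : ℂ) = ∑ j, (Vᴴ * ρ * V) (i, j) (i, j) := by
            exact Finset.sum_congr rfl fun j _ => (hdiag (i, j)).symm
        _ = ptrace₂ (Vᴴ * ρ * V) i i := rfl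
        _ = (U₁ᴴ * ptrace₂ ρ * U₁) i i := by rw [hV, ptrace₂_conj ρ U₁ U₂ hU₂2]
        _ = Matrix.diagonal (RCLike.ofReal ∘ h₁.eigenvalues) i i := by
            rw [← Matrix.star_eq_conjTranspose, ← h₁.conjStarAlgAut_star_eigenvectorUnitary,
              Unitary.conjStarAlgAut_star_apply]
        _ = ((h₁.eigenvalues i : ℝ) : ℂ) := by simp
    exact_mod_cast hc
  have hmarg₂ : ∀ j, ∑ i, p (i, j) = h₂.eigenvalues j := by
    intro j
    have hc : ((∑ i, p (i, j) : ℝ) : ℂ) = ((h₂.eigenvalues j : ℝ) : ℂ) := by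
      push_cast
      calc ∑ i, (p (i, j) : ℂ) = ∑ i, (Vᴴ * ρ * V) (i, j) (i, j) := by
            exact Finset.sum_congr rfl fun i _ => (hdiag (i, j)).symm
        _ = ptrace₁ (Vᴴ * ρ * V) j j := rfl
        _ = (U₂ᴴ * ptrace₁ ρ * U₂) j j := by rw [hV, ptrace₁_conj ρ U₁ U₂ hU₁2]
        _ = Matrix.diagonal (RCLike.ofReal ∘ h₂.eigenvalues) j j := by
            rw [← Matrix.star_eq_conjTranspose, ← h₂.conjStarAlgAut_star_eigenvectorUnitary,
              Unitary.conjStarAlgAut_star_apply]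
        _ = ((h₂.eigenvalues j : ℝ) : ℂ) := by simp
    exact_mod_cast hc
  -- total probability is 1
  have hsump : ∑ x, p x = 1 := by
    have htr' : (Matrix.diagonal (RCLike.ofReal ∘ lam) : Matrix _ _ ℂ).trace = 1 := by
      have hspec : ρ = W * Matrix.diagonal (RCLike.ofReal ∘ lam) * Wᴴ := by
        rw [← Matrix.star_eq_conjTranspose]; exact hH.spectral_theorem
      rw [← htr, hspec, Matrix.trace_mul_cycle, hW1, Matrix.one_mul]
    have hsl : ((∑ k, lam k : ℝ) : ℂ) = 1 := by
      rw [← htr', Matrix.trace_diagonal]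
      push_cast
      rfl
    have hsl' : ∑ k, lam k = 1 := by exact_mod_cast hsl
    calc ∑ x, p x = ∑ x, ∑ k, B x k * lam k := rfl
      _ = ∑ k, (∑ x, B x k) * lam k := by
          rw [Finset.sum_comm]
          exact Finset.sum_congr rfl fun k _ => (Finset.sum_mul _ _ _).symm
      _ = ∑ k, lam k := by
          exact Finset.sum_congr rfl fun k _ => by rw [hcol k, one_mul]
      _ = 1 := hsl'
  -- put everything together
  have step1 : vnEntropy ρ = ∑ k, Real.negMulLog (lam k) := by
    rw [vnEntropy, dif_pos hH]
  have step2 : vnEntropy (ptrace₂ ρ) = ∑ i, Real.negMulLog (h₁.eigenvalues i) := by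
    rw [vnEntropy, dif_pos h₁]
  have step3 : vnEntropy (ptrace₁ ρ) = ∑ j, Real.negMulLog (h₂.eigenvalues j) := by
    rw [vnEntropy, dif_pos h₂]
  rw [step1, step2, step3]
  calc ∑ k, Real.negMulLog (lam k)
      ≤ ∑ x, Real.negMulLog (p x) := dephase B lam hB0 hrow hcol hlam0
    _ ≤ (∑ i, Real.negMulLog (∑ j, p (i, j))) + ∑ j, Real.negMulLog (∑ i, p (i, j)) :=
        classical_subadd p hp0 hsump
    _ = (∑ i, Real.negMulLog (h₁.eigenvalues i)) + ∑ j, Real.negMulLog (h₂.eigenvalues j) := by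
        have l1 : (∑ i, Real.negMulLog (∑ j, p (i, j)))
            = ∑ i, Real.negMulLog (h₁.eigenvalues i) :=
          Finset.sum_congr rfl fun i _ => by rw [hmarg₁ i]
        have l2 : (∑ j, Real.negMulLog (∑ i, p (i, j)))
            = ∑ j, Real.negMulLog (h₂.eigenvalues j) :=
          Finset.sum_congr rfl fun j _ => by rw [hmarg₂ j]
        rw [l1, l2]

end Aux
end

section
/- The entanglement of purification of a product state vanishes: if ρ = ρ₁ ⊗ ρ₂ for density matrices ρ₁ on ℂ^{n₁} and ρ₂ on ℂ^{n₂}, then E_P(ρ) = 0. -/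
open scoped Kronecker ComplexOrder

/-- Partial trace over the two ancilla factors `ℂ^{m₁} ⊗ ℂ^{m₂}` of a matrix on
`(ℂ^{n₁} ⊗ ℂ^{m₁}) ⊗ (ℂ^{n₂} ⊗ ℂ^{m₂})`, giving a matrix on `ℂ^{n₁} ⊗ ℂ^{n₂}`. -/
noncomputable def ptraceAnc {n₁ m₁ n₂ m₂ : ℕ}
    (σ : Matrix ((Fin n₁ × Fin m₁) × (Fin n₂ × Fin m₂))
      ((Fin n₁ × Fin m₁) × (Fin n₂ × Fin m₂)) ℂ) :
    Matrix (Fin n₁ × Fin n₂) (Fin n₁ × Fin n₂) ℂ :=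
  Matrix.of fun p q => ∑ j₁ : Fin m₁, ∑ j₂ : Fin m₂,
    σ ((p.1, j₁), (p.2, j₂)) ((q.1, j₁), (q.2, j₂))

/-- The entanglement of purification `E_P(ρ)`: the infimum of
`S(Tr_{A₂A'₂} |ψ⟩⟨ψ|)` over all purifications `ψ` of `ρ` in
`(ℂ^{n₁} ⊗ ℂ^{m₁}) ⊗ (ℂ^{n₂} ⊗ ℂ^{m₂})`. -/
noncomputable def entPurification {n₁ n₂ : ℕ}
    (ρ : Matrix (Fin n₁ × Fin n₂) (Fin n₁ × Fin n₂) ℂ) : ℝ :=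
  sInf {x : ℝ | ∃ (m₁ m₂ : ℕ), 1 ≤ m₁ ∧ 1 ≤ m₂ ∧
    ∃ ψ : (Fin n₁ × Fin m₁) × (Fin n₂ × Fin m₂) → ℂ,
      (∑ z, ‖ψ z‖ ^ 2 = 1) ∧ ptraceAnc (outerProd ψ) = ρ ∧
      x = vnEntropy (ptrace₂ (outerProd ψ))}

/- ------------------- auxiliary lemmas ------------------- -/

open Matrix

/-- Trace of a Hermitian matrix is the sum of eigenvalues. -/
lemma trace_eq_sum_eig {d : Type*} [Fintype d] [DecidableEq d] {A : Matrix d d ℂ}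
    (hA : A.IsHermitian) : A.trace = ∑ i, (hA.eigenvalues i : ℂ) := by
  exact hA.trace_eq_sum_eigenvalues

/-- Eigenvalues of an idempotent Hermitian matrix are 0 or 1. -/
lemma eig_idem {d : Type*} [Fintype d] [DecidableEq d] {A : Matrix d d ℂ}
    (hA : A.IsHermitian) (hidem : A * A = A) (i : d) :
    hA.eigenvalues i = 0 ∨ hA.eigenvalues i = 1 := by
  set v : d → ℂ := ⇑(hA.eigenvectorBasis i) with hv
  have hvne : v ≠ 0 := by
    intro h
    apply hA.eigenvectorBasis.orthonormal.ne_zero i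
    ext x
    exact congrFun h x
  have h1 : A *ᵥ v = hA.eigenvalues i • v := hA.mulVec_eigenvectorBasis i
  have h2 : (A * A) *ᵥ v = (hA.eigenvalues i * hA.eigenvalues i) • v := by
    rw [← Matrix.mulVec_mulVec, h1, Matrix.mulVec_smul, h1, smul_smul]
  rw [hidem, h1] at h2
  have h3 : (hA.eigenvalues i * hA.eigenvalues i - hA.eigenvalues i) • v = 0 := by
    rw [sub_smul, h2, sub_self]
  rcases smul_eq_zero.mp h3 with h | h
  · have h4 : hA.eigenvalues i * hA.eigenvalues i = hA.eigenvalues i := sub_eq_zero.mp h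
    have h5 : hA.eigenvalues i * (hA.eigenvalues i - 1) = 0 := by ring_nf; linarith
    rcases mul_eq_zero.mp h5 with h6 | h6
    · exact Or.inl h6
    · exact Or.inr (by linarith)
  · exact absurd h hvne

lemma outerProd_isHermitian {d : Type*} (φ : d → ℂ) : (outerProd φ).IsHermitian := by
  ext i j
  simp only [outerProd, Matrix.conjTranspose_apply, Matrix.vecMulVec_apply, Pi.star_apply,
    star_mul', star_star]
  ring

/-- The entropy of a normalized rank-one projector vanishes. -/
lemma vnEntropy_outerProd {d : Type*} [Fintype d] [DecidableEq d] (φ : d → ℂ)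
    (h : ∑ z, φ z * star (φ z) = 1) : vnEntropy (outerProd φ) = 0 := by
  have hH := outerProd_isHermitian φ
  have hidem : outerProd φ * outerProd φ = outerProd φ := by
    ext i j
    simp only [outerProd, Matrix.mul_apply, Matrix.vecMulVec_apply, Pi.star_apply]
    calc ∑ k, φ i * star (φ k) * (φ k * star (φ j))
        = (φ i * star (φ j)) * ∑ k, φ k * star (φ k) := by
          rw [Finset.mul_sum]; exact Finset.sum_congr rfl fun k _ => by ring
      _ = φ i * star (φ j) := by rw [h, mul_one]
  rw [vnEntropy, dif_pos hH]
  apply Finset.sum_eq_zero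
  intro i _
  rcases eig_idem hH hidem i with h0 | h1
  · rw [h0, Real.negMulLog_zero]
  · rw [h1, Real.negMulLog_one]

lemma ptrace₂_outerProd_eq {α β : Type*} [Fintype β] (ψ : α × β → ℂ) :
    ptrace₂ (outerProd ψ) =
      (Matrix.of fun a b => ψ (a, b)) * (Matrix.of fun a b => ψ (a, b))ᴴ := by
  ext a a'
  simp [ptrace₂, outerProd, Matrix.mul_apply, Matrix.vecMulVec_apply,
    Matrix.conjTranspose_apply]

/-- Nonnegativity of the entropy of the reduced state of a normalized vector. -/
lemma vnEntropy_ptrace₂_nonneg {α β : Type*} [Fintype α] [Fintype β] [DecidableEq α]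
    (ψ : α × β → ℂ) (hn : ∑ z, ‖ψ z‖ ^ 2 = 1) : 0 ≤ vnEntropy (ptrace₂ (outerProd ψ)) := by
  have hpsd : (ptrace₂ (outerProd ψ)).PosSemidef := by
    rw [ptrace₂_outerProd_eq]
    exact Matrix.posSemidef_self_mul_conjTranspose _
  have hH := hpsd.isHermitian
  have htr : (ptrace₂ (outerProd ψ)).trace = 1 := by
    have : (ptrace₂ (outerProd ψ)).trace = ∑ z : α × β, ψ z * star (ψ z) := by
      rw [Matrix.trace, Fintype.sum_prod_type]
      simp [ptrace₂, outerProd, Matrix.vecMulVec_apply, Matrix.diag]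
    rw [this]
    have : ∑ z : α × β, ψ z * star (ψ z) = ((∑ z : α × β, ‖ψ z‖ ^ 2 : ℝ) : ℂ) := by
      push_cast
      exact Finset.sum_congr rfl fun z _ => (RCLike.mul_conj (ψ z))
    rw [this, hn, Complex.ofReal_one]
  -- eigenvalues are nonnegative and sum to one
  have hsum : ∑ i, hH.eigenvalues i = 1 := by
    have h1 := trace_eq_sum_eig hH
    rw [htr] at h1
    have : ((∑ i, hH.eigenvalues i : ℝ) : ℂ) = 1 := by push_cast; exact h1.symm
    exact_mod_cast this
  rw [vnEntropy, dif_pos hH]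
  apply Finset.sum_nonneg
  intro i _
  apply Real.negMulLog_nonneg (hpsd.eigenvalues_nonneg i)
  calc hH.eigenvalues i ≤ ∑ j, hH.eigenvalues j :=
        Finset.single_le_sum (fun j _ => hpsd.eigenvalues_nonneg j) (Finset.mem_univ i)
    _ = 1 := hsum

/-- The entanglement of purification of a product state vanishes. -/
theorem entPurification_of_product_eq_zero {n₁ n₂ : ℕ}
    (ρ₁ : Matrix (Fin n₁) (Fin n₁) ℂ) (ρ₂ : Matrix (Fin n₂) (Fin n₂) ℂ)
    (hρ₁ : IsDensityMatrix ρ₁) (hρ₂ : IsDensityMatrix ρ₂) :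
    entPurification (ρ₁ ⊗ₖ ρ₂) = 0 := by
  obtain ⟨h₁p, h₁t⟩ := hρ₁
  obtain ⟨h₂p, h₂t⟩ := hρ₂
  have hn₁ : 1 ≤ n₁ := by
    rcases Nat.eq_zero_or_pos n₁ with h | h
    · subst h; simp [Matrix.trace] at h₁t
    · exact h
  have hn₂ : 1 ≤ n₂ := by
    rcases Nat.eq_zero_or_pos n₂ with h | h
    · subst h; simp [Matrix.trace] at h₂t
    · exact h
  open scoped MatrixOrder in set s₁ := CFC.sqrt ρ₁ with hs₁def
  open scoped MatrixOrder in set s₂ := CFC.sqrt ρ₂ with hs₂def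
  have hs₁h : s₁ᴴ = s₁ := by open scoped MatrixOrder in exact (CFC.sqrt_nonneg ρ₁).posSemidef.isHermitian
  have hs₂h : s₂ᴴ = s₂ := by open scoped MatrixOrder in exact (CFC.sqrt_nonneg ρ₂).posSemidef.isHermitian
  -- key entrywise identities
  have key₁ : ∀ i i', ∑ j, s₁ i j * star (s₁ i' j) = ρ₁ i i' := by
    intro i i'
    have h1 : (s₁ * s₁ᴴ) i i' = ρ₁ i i' := by rw [hs₁h, show s₁ * s₁ = ρ₁ from by open scoped MatrixOrder in exact CFC.sqrt_mul_sqrt_self ρ₁ h₁p.nonneg]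
    rw [← h1, Matrix.mul_apply]
    exact Finset.sum_congr rfl fun j _ => by rw [Matrix.conjTranspose_apply]
  have key₂ : ∀ i i', ∑ j, s₂ i j * star (s₂ i' j) = ρ₂ i i' := by
    intro i i'
    have h1 : (s₂ * s₂ᴴ) i i' = ρ₂ i i' := by rw [hs₂h, show s₂ * s₂ = ρ₂ from by open scoped MatrixOrder in exact CFC.sqrt_mul_sqrt_self ρ₂ h₂p.nonneg]
    rw [← h1, Matrix.mul_apply]
    exact Finset.sum_congr rfl fun j _ => by rw [Matrix.conjTranspose_apply]
  have tr₁ : ∑ p : Fin n₁ × Fin n₁, s₁ p.1 p.2 * star (s₁ p.1 p.2) = 1 := by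
    rw [Fintype.sum_prod_type]
    calc ∑ i, ∑ j, s₁ i j * star (s₁ i j) = ∑ i, ρ₁ i i :=
          Finset.sum_congr rfl fun i _ => key₁ i i
      _ = 1 := h₁t
  have tr₂ : ∑ p : Fin n₂ × Fin n₂, s₂ p.1 p.2 * star (s₂ p.1 p.2) = 1 := by
    rw [Fintype.sum_prod_type]
    calc ∑ i, ∑ j, s₂ i j * star (s₂ i j) = ∑ i, ρ₂ i i :=
          Finset.sum_congr rfl fun i _ => key₂ i i
      _ = 1 := h₂t
  -- the purification
  set ψ : (Fin n₁ × Fin n₁) × (Fin n₂ × Fin n₂) → ℂ :=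
    fun z => s₁ z.1.1 z.1.2 * s₂ z.2.1 z.2.2 with hψdef
  -- real norms sum to one
  have rtr₁ : ∑ p : Fin n₁ × Fin n₁, ‖s₁ p.1 p.2‖ ^ 2 = 1 := by
    have : ((∑ p : Fin n₁ × Fin n₁, ‖s₁ p.1 p.2‖ ^ 2 : ℝ) : ℂ) = 1 := by
      push_cast
      rw [← tr₁]
      exact Finset.sum_congr rfl fun p _ => (RCLike.mul_conj (s₁ p.1 p.2)).symm
    exact_mod_cast this
  have rtr₂ : ∑ p : Fin n₂ × Fin n₂, ‖s₂ p.1 p.2‖ ^ 2 = 1 := by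
    have : ((∑ p : Fin n₂ × Fin n₂, ‖s₂ p.1 p.2‖ ^ 2 : ℝ) : ℂ) = 1 := by
      push_cast
      rw [← tr₂]
      exact Finset.sum_congr rfl fun p _ => (RCLike.mul_conj (s₂ p.1 p.2)).symm
    exact_mod_cast this
  have hnorm : ∑ z, ‖ψ z‖ ^ 2 = 1 := by
    calc ∑ z, ‖ψ z‖ ^ 2
        = ∑ p : Fin n₁ × Fin n₁, ∑ q : Fin n₂ × Fin n₂, ‖s₁ p.1 p.2‖ ^ 2 * ‖s₂ q.1 q.2‖ ^ 2 := by
          rw [Fintype.sum_prod_type]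
          refine Finset.sum_congr rfl fun p _ => Finset.sum_congr rfl fun q _ => ?_
          rw [hψdef]; simp [norm_mul, mul_pow]
      _ = (∑ p : Fin n₁ × Fin n₁, ‖s₁ p.1 p.2‖ ^ 2) *
            (∑ q : Fin n₂ × Fin n₂, ‖s₂ q.1 q.2‖ ^ 2) := by
          rw [Finset.sum_mul_sum]
      _ = 1 := by rw [rtr₁, rtr₂, mul_one]
  -- purification property
  have hptr : ptraceAnc (outerProd ψ) = ρ₁ ⊗ₖ ρ₂ := by
    ext p q
    simp only [ptraceAnc, outerProd, Matrix.of_apply, Matrix.vecMulVec_apply, Pi.star_apply,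
      Matrix.kroneckerMap_apply]
    calc ∑ j₁, ∑ j₂, ψ ((p.1, j₁), (p.2, j₂)) * star (ψ ((q.1, j₁), (q.2, j₂)))
        = ∑ j₁, ∑ j₂, (s₁ p.1 j₁ * star (s₁ q.1 j₁)) * (s₂ p.2 j₂ * star (s₂ q.2 j₂)) := by
          refine Finset.sum_congr rfl fun j₁ _ => Finset.sum_congr rfl fun j₂ _ => ?_
          rw [hψdef]; simp only [star_mul']; ring
      _ = (∑ j₁, s₁ p.1 j₁ * star (s₁ q.1 j₁)) * (∑ j₂, s₂ p.2 j₂ * star (s₂ q.2 j₂)) := by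
          rw [Finset.sum_mul_sum]
      _ = ρ₁ p.1 q.1 * ρ₂ p.2 q.2 := by rw [key₁, key₂]
  -- the reduced state is pure
  have hred : ptrace₂ (outerProd ψ) = outerProd (fun a : Fin n₁ × Fin n₁ => s₁ a.1 a.2) := by
    ext a a'
    simp only [ptrace₂, outerProd, Matrix.of_apply, Matrix.vecMulVec_apply, Pi.star_apply]
    calc ∑ b : Fin n₂ × Fin n₂, ψ (a, b) * star (ψ (a', b))
        = ∑ b : Fin n₂ × Fin n₂, (s₁ a.1 a.2 * star (s₁ a'.1 a'.2)) * (s₂ b.1 b.2 * star (s₂ b.1 b.2)) := by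
          refine Finset.sum_congr rfl fun b _ => ?_
          rw [hψdef]; simp only [star_mul']; ring
      _ = (s₁ a.1 a.2 * star (s₁ a'.1 a'.2)) * ∑ b : Fin n₂ × Fin n₂, s₂ b.1 b.2 * star (s₂ b.1 b.2) := by
          rw [Finset.mul_sum]
      _ = s₁ a.1 a.2 * star (s₁ a'.1 a'.2) := by rw [tr₂, mul_one]
  have hent : vnEntropy (ptrace₂ (outerProd ψ)) = 0 := by
    rw [hred]
    exact vnEntropy_outerProd _ tr₁
  -- membership and lower bound
  set S := {x : ℝ | ∃ (m₁ m₂ : ℕ), 1 ≤ m₁ ∧ 1 ≤ m₂ ∧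
    ∃ ψ : (Fin n₁ × Fin m₁) × (Fin n₂ × Fin m₂) → ℂ,
      (∑ z, ‖ψ z‖ ^ 2 = 1) ∧ ptraceAnc (outerProd ψ) = ρ₁ ⊗ₖ ρ₂ ∧
      x = vnEntropy (ptrace₂ (outerProd ψ))} with hSdef
  have hmem : (0 : ℝ) ∈ S := ⟨n₁, n₂, hn₁, hn₂, ψ, hnorm, hptr, hent.symm⟩
  have hlb : ∀ x ∈ S, (0 : ℝ) ≤ x := by
    rintro x ⟨m₁, m₂, _, _, φ, hφn, _, rfl⟩
    exact vnEntropy_ptrace₂_nonneg φ hφn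
  have : entPurification (ρ₁ ⊗ₖ ρ₂) = sInf S := rfl
  rw [this]
  exact le_antisymm (csInf_le ⟨0, hlb⟩ hmem) (le_csInf ⟨0, hmem⟩ hlb)
end

section
/- If some purification of a density matrix ρ on ℂ^{n₁} ⊗ ℂ^{n₂} achieves zero entropy across the (A₁A'₁ : A₂A'₂) cut — i.e., there exist m₁, m₂ ≥ 1 and a unit vector ψ ∈ (ℂ^{n₁} ⊗ ℂ^{m₁}) ⊗ (ℂ^{n₂} ⊗ ℂ^{m₂}) whose partial trace over ℂ^{m₁} ⊗ ℂ^{m₂} equals ρ and with S(Tr_{A₂A'₂} |ψ⟩⟨ψ|) = 0 — then ρ is a product state: ρ = ρ₁ ⊗ ρ₂ with ρ₁ = Tr₂ ρ and ρ₂ = Tr₁ ρ. -/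
open scoped Kronecker ComplexOrder

/- ### Auxiliary lemmas -/

/-- A PSD matrix with unit trace and zero entropy is a rank-one outer product. -/
lemma exists_rankone {d : Type*} [Fintype d] [DecidableEq d] {τ : Matrix d d ℂ}
    (hpsd : τ.PosSemidef) (htr : τ.trace = 1) (hent : vnEntropy τ = 0) :
    ∃ φ : d → ℂ, (∑ i, φ i * (starRingEnd ℂ) (φ i) = 1) ∧
      ∀ i i', τ i i' = φ i * (starRingEnd ℂ) (φ i') := by
  have hH : τ.IsHermitian := hpsd.1
  set lam := hH.eigenvalues with hlam
  set U : Matrix d d ℂ := (hH.eigenvectorUnitary : Matrix d d ℂ) with hU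
  have hcol : ∀ k k', ∑ i, (starRingEnd ℂ) (U i k) * U i k' = if k = k' then 1 else 0 := by
    intro k k'
    have h1 : star U * U = 1 := Unitary.coe_star_mul_self hH.eigenvectorUnitary
    have := congrFun (congrFun h1 k) k'
    simpa [Matrix.mul_apply, Matrix.star_apply, Matrix.one_apply] using this
  have hspec : ∀ i i', τ i i' = ∑ k, U i k * (lam k : ℂ) * (starRingEnd ℂ) (U i' k) := by
    intro i i'
    conv_lhs => rw [hH.spectral_theorem]
    simp only [Unitary.conjStarAlgAut_apply, Matrix.mul_apply, Matrix.diagonal_apply, Function.comp_apply,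
      Matrix.star_apply, mul_ite, mul_zero, ite_mul, zero_mul,
      Finset.sum_ite_eq, Finset.sum_ite_eq', Finset.mem_univ, if_true, hU, hlam,
      RCLike.star_def]
    rfl
  have hsum : ∑ k, lam k = 1 := by
    have hc : ((∑ k, lam k : ℝ) : ℂ) = 1 := by
      have h2 : τ.trace = ∑ k, (lam k : ℂ) := by
        rw [Matrix.trace]
        calc ∑ i, τ.diag i = ∑ i, ∑ k, U i k * (lam k : ℂ) * (starRingEnd ℂ) (U i k) := by
              refine Finset.sum_congr rfl fun i _ => hspec i i
          _ = ∑ k, ∑ i, U i k * (lam k : ℂ) * (starRingEnd ℂ) (U i k) := Finset.sum_comm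
          _ = ∑ k, (lam k : ℂ) * ∑ i, (starRingEnd ℂ) (U i k) * U i k := by
              refine Finset.sum_congr rfl fun k _ => ?_
              rw [Finset.mul_sum]
              exact Finset.sum_congr rfl fun i _ => by ring
          _ = ∑ k, (lam k : ℂ) := by
              refine Finset.sum_congr rfl fun k _ => ?_
              rw [hcol k k, if_pos rfl, mul_one]
      rw [← htr, h2]
      push_cast
      ring
    exact_mod_cast hc
  have hnn : ∀ k, 0 ≤ lam k := fun k => hpsd.eigenvalues_nonneg k
  have hle1 : ∀ k, lam k ≤ 1 := by
    intro k
    calc lam k ≤ ∑ k', lam k' :=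
          Finset.single_le_sum (fun k' _ => hnn k') (Finset.mem_univ k)
      _ = 1 := hsum
  have hent' : ∑ k, Real.negMulLog (lam k) = 0 := by
    rw [vnEntropy, dif_pos hH] at hent
    exact hent
  have h0 : ∀ k, Real.negMulLog (lam k) = 0 := by
    intro k
    have := (Finset.sum_eq_zero_iff_of_nonneg
      (fun k' _ => Real.negMulLog_nonneg (hnn k') (hle1 k'))).mp hent'
    exact this k (Finset.mem_univ k)
  have h01 : ∀ k, lam k = 0 ∨ lam k = 1 := by
    intro k
    have := h0 k
    rw [Real.negMulLog, neg_mul, neg_eq_zero] at this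
    rcases mul_eq_zero.mp this with h | h
    · exact Or.inl h
    · rcases Real.log_eq_zero.mp h with h | h | h
      · exact Or.inl h
      · exact Or.inr h
      · exact absurd (h ▸ hnn k) (by norm_num)
  obtain ⟨k₀, hk₀⟩ : ∃ k, lam k = 1 := by
    by_contra hc
    push_neg at hc
    have hz : ∀ k, lam k = 0 := fun k => (h01 k).resolve_right (hc k)
    rw [Finset.sum_congr rfl fun k _ => hz k] at hsum
    simp at hsum
  have hrest : ∀ k, k ≠ k₀ → lam k = 0 := by
    intro k hk
    have he : lam k₀ + ∑ k' ∈ Finset.univ.erase k₀, lam k' = 1 := by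
      rw [Finset.add_sum_erase Finset.univ lam (Finset.mem_univ k₀)]
      exact hsum
    have hz : ∑ k' ∈ Finset.univ.erase k₀, lam k' = 0 := by
      rw [hk₀] at he; linarith
    have := (Finset.sum_eq_zero_iff_of_nonneg
      (fun k' _ => hnn k')).mp hz
    exact this k (Finset.mem_erase.mpr ⟨hk, Finset.mem_univ k⟩)
  refine ⟨fun i => U i k₀, ?_, ?_⟩
  · have := hcol k₀ k₀
    rw [if_pos rfl] at this
    rw [← this]
    exact Finset.sum_congr rfl fun i _ => by ring
  · intro i i'
    rw [hspec i i', Finset.sum_eq_single k₀]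
    · rw [hk₀]; push_cast; ring
    · intro b _ hb
      rw [hrest b hb]; push_cast; ring
    · intro hb; exact absurd (Finset.mem_univ k₀) hb

/-- If the reduced state of `ψ` is the rank-one projector onto a unit vector `φ`,
then `ψ` factorizes as `φ ⊗ c`. -/
lemma pure_reduced {α β : Type*} [Fintype α] [Fintype β] (ψ : α × β → ℂ) (φ : α → ℂ)
    (hφ : ∑ i, φ i * (starRingEnd ℂ) (φ i) = 1)
    (hτ : ∀ i i', ∑ j, ψ (i, j) * (starRingEnd ℂ) (ψ (i', j))
      = φ i * (starRingEnd ℂ) (φ i')) :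
    ∀ i j, ψ (i, j) = φ i * (∑ k, (starRingEnd ℂ) (φ k) * ψ (k, j)) := by
  classical
  set c : β → ℂ := fun j => ∑ k, (starRingEnd ℂ) (φ k) * ψ (k, j) with hc
  have hconj_c : ∀ j, (starRingEnd ℂ) (c j) = ∑ k, φ k * (starRingEnd ℂ) (ψ (k, j)) := by
    intro j
    rw [hc]
    simp only [map_sum, map_mul, RingHomCompTriple.comp_apply, Complex.conj_conj,
      RingHom.id_apply, starRingEnd_self_apply]
  have hC : ∑ j, c j * (starRingEnd ℂ) (c j) = 1 := by
    calc ∑ j, c j * (starRingEnd ℂ) (c j)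
        = ∑ j, ∑ k, ∑ k', ((starRingEnd ℂ) (φ k) * φ k')
            * (ψ (k, j) * (starRingEnd ℂ) (ψ (k', j))) := by
          refine Finset.sum_congr rfl fun j _ => ?_
          rw [hconj_c j, hc]
          rw [Finset.sum_mul_sum]
          refine Finset.sum_congr rfl fun k _ => Finset.sum_congr rfl fun k' _ => by ring
      _ = ∑ k, ∑ k', ((starRingEnd ℂ) (φ k) * φ k')
            * ∑ j, ψ (k, j) * (starRingEnd ℂ) (ψ (k', j)) := by
          rw [Finset.sum_comm]
          refine Finset.sum_congr rfl fun k _ => ?_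
          rw [Finset.sum_comm]
          refine Finset.sum_congr rfl fun k' _ => ?_
          rw [Finset.mul_sum]
      _ = ∑ k, ∑ k', ((starRingEnd ℂ) (φ k) * φ k') * (φ k * (starRingEnd ℂ) (φ k')) := by
          refine Finset.sum_congr rfl fun k _ => Finset.sum_congr rfl fun k' _ => by
            rw [hτ k k']
      _ = (∑ k, φ k * (starRingEnd ℂ) (φ k)) * (∑ k', φ k' * (starRingEnd ℂ) (φ k')) := by
          rw [Finset.sum_mul_sum]
          refine Finset.sum_congr rfl fun k _ => Finset.sum_congr rfl fun k' _ => by ring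
      _ = 1 := by rw [hφ, one_mul]
  -- the total squared deviation vanishes
  have hE : ∑ i, ∑ j, (ψ (i, j) - φ i * c j) * (starRingEnd ℂ) (ψ (i, j) - φ i * c j)
      = 0 := by
    have hexp : ∀ i j, (ψ (i, j) - φ i * c j) * (starRingEnd ℂ) (ψ (i, j) - φ i * c j)
        = ψ (i, j) * (starRingEnd ℂ) (ψ (i, j))
          - (φ i * (starRingEnd ℂ) (ψ (i, j))) * c j
          - ((starRingEnd ℂ) (φ i) * ψ (i, j)) * (starRingEnd ℂ) (c j)
          + (φ i * (starRingEnd ℂ) (φ i)) * (c j * (starRingEnd ℂ) (c j)) := by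
      intro i j
      simp only [map_sub, map_mul]
      ring
    have hT1 : ∑ i, ∑ j, ψ (i, j) * (starRingEnd ℂ) (ψ (i, j)) = 1 := by
      rw [Finset.sum_congr rfl fun i _ => hτ i i]
      exact hφ
    have hT2 : ∑ i, ∑ j, (φ i * (starRingEnd ℂ) (ψ (i, j))) * c j = 1 := by
      rw [Finset.sum_comm]
      calc ∑ j, ∑ i, (φ i * (starRingEnd ℂ) (ψ (i, j))) * c j
          = ∑ j, (starRingEnd ℂ) (c j) * c j := by
            refine Finset.sum_congr rfl fun j _ => ?_
            rw [hconj_c j, Finset.sum_mul]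
        _ = 1 := by
            rw [← hC]
            exact Finset.sum_congr rfl fun j _ => by ring
    have hT3 : ∑ i, ∑ j, ((starRingEnd ℂ) (φ i) * ψ (i, j)) * (starRingEnd ℂ) (c j)
        = 1 := by
      rw [Finset.sum_comm]
      calc ∑ j, ∑ i, ((starRingEnd ℂ) (φ i) * ψ (i, j)) * (starRingEnd ℂ) (c j)
          = ∑ j, c j * (starRingEnd ℂ) (c j) := by
            refine Finset.sum_congr rfl fun j _ => ?_
            rw [hc]
            rw [Finset.sum_mul]
        _ = 1 := hC
    have hT4 : ∑ i, ∑ j, (φ i * (starRingEnd ℂ) (φ i)) * (c j * (starRingEnd ℂ) (c j))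
        = 1 := by
      rw [← Finset.sum_mul_sum, hφ, hC, one_mul]
    calc ∑ i, ∑ j, (ψ (i, j) - φ i * c j) * (starRingEnd ℂ) (ψ (i, j) - φ i * c j)
        = ∑ i, ∑ j, (ψ (i, j) * (starRingEnd ℂ) (ψ (i, j))
            - (φ i * (starRingEnd ℂ) (ψ (i, j))) * c j
            - ((starRingEnd ℂ) (φ i) * ψ (i, j)) * (starRingEnd ℂ) (c j)
            + (φ i * (starRingEnd ℂ) (φ i)) * (c j * (starRingEnd ℂ) (c j))) := by
          exact Finset.sum_congr rfl fun i _ => Finset.sum_congr rfl fun j _ => hexp i j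
      _ = (∑ i, ∑ j, ψ (i, j) * (starRingEnd ℂ) (ψ (i, j)))
            - (∑ i, ∑ j, (φ i * (starRingEnd ℂ) (ψ (i, j))) * c j)
            - (∑ i, ∑ j, ((starRingEnd ℂ) (φ i) * ψ (i, j)) * (starRingEnd ℂ) (c j))
            + (∑ i, ∑ j, (φ i * (starRingEnd ℂ) (φ i)) * (c j * (starRingEnd ℂ) (c j))) := by
          simp [Finset.sum_sub_distrib, Finset.sum_add_distrib]
      _ = 0 := by rw [hT1, hT2, hT3, hT4]; ring
  -- convert to a real statement and conclude pointwise vanishing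
  have hreal : ∑ i, ∑ j, Complex.normSq (ψ (i, j) - φ i * c j) = 0 := by
    have : ((∑ i, ∑ j, Complex.normSq (ψ (i, j) - φ i * c j) : ℝ) : ℂ) = 0 := by
      push_cast
      rw [← hE]
      exact Finset.sum_congr rfl fun i _ => Finset.sum_congr rfl fun j _ =>
        (Complex.mul_conj _).symm
    exact_mod_cast this
  intro i j
  have hterm : ∀ i ∈ Finset.univ, (0:ℝ) ≤ ∑ j, Complex.normSq (ψ (i, j) - φ i * c j) :=
    fun i _ => Finset.sum_nonneg fun j _ => Complex.normSq_nonneg _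
  have h1 := (Finset.sum_eq_zero_iff_of_nonneg hterm).mp hreal i (Finset.mem_univ i)
  have h2 := (Finset.sum_eq_zero_iff_of_nonneg
    (fun j' _ => Complex.normSq_nonneg (ψ (i, j') - φ i * c j'))).mp h1 j (Finset.mem_univ j)
  have := Complex.normSq_eq_zero.mp h2
  have := sub_eq_zero.mp this
  exact this

/-- If some purification of `ρ` achieves zero entropy across the
`(A₁A'₁ : A₂A'₂)` cut, then `ρ` is a product state. -/
theorem product_of_zero_entropy_purification {n₁ n₂ : ℕ}
    (ρ : Matrix (Fin n₁ × Fin n₂) (Fin n₁ × Fin n₂) ℂ) (hρ : IsDensityMatrix ρ)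
    (h : ∃ (m₁ m₂ : ℕ), 1 ≤ m₁ ∧ 1 ≤ m₂ ∧
      ∃ ψ : (Fin n₁ × Fin m₁) × (Fin n₂ × Fin m₂) → ℂ,
        (∑ z, ‖ψ z‖ ^ 2 = 1) ∧ ptraceAnc (outerProd ψ) = ρ ∧
        vnEntropy (ptrace₂ (outerProd ψ)) = 0) :
    ρ = (ptrace₂ ρ) ⊗ₖ (ptrace₁ ρ) := by
  obtain ⟨m₁, m₂, hm₁, hm₂, ψ, hnorm, hpt, hent⟩ := h
  set τ := ptrace₂ (outerProd ψ) with hτdef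
  have hτ_apply : ∀ i i', τ i i' = ∑ j, ψ (i, j) * (starRingEnd ℂ) (ψ (i', j)) := by
    intro i i'
    simp [hτdef, ptrace₂, outerProd, Matrix.vecMulVec_apply, Pi.star_apply,
      RCLike.star_def]
  have hpsd : τ.PosSemidef := by
    set M : Matrix (Fin n₁ × Fin m₁) (Fin n₂ × Fin m₂) ℂ :=
      Matrix.of fun i j => ψ (i, j) with hM
    have : τ = M * M.conjTranspose := by
      ext i i'
      rw [hτ_apply]
      simp [Matrix.mul_apply, Matrix.conjTranspose_apply, RCLike.star_def, hM]
    rw [this]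
    exact Matrix.posSemidef_self_mul_conjTranspose M
  have htr : τ.trace = 1 := by
    have h2 : τ.trace = ((∑ z, ‖ψ z‖ ^ 2 : ℝ) : ℂ) := by
      calc τ.trace = ∑ i, ∑ j, ψ (i, j) * (starRingEnd ℂ) (ψ (i, j)) :=
            Finset.sum_congr rfl fun i _ => hτ_apply i i
        _ = ∑ z : (Fin n₁ × Fin m₁) × (Fin n₂ × Fin m₂), ψ z * (starRingEnd ℂ) (ψ z) :=
            (Fintype.sum_prod_type (f := fun z => ψ z * (starRingEnd ℂ) (ψ z))).symm
        _ = ∑ z : (Fin n₁ × Fin m₁) × (Fin n₂ × Fin m₂), ((‖ψ z‖ ^ 2 : ℝ) : ℂ) := by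
            refine Finset.sum_congr rfl fun z _ => ?_
            rw [Complex.mul_conj, Complex.normSq_eq_norm_sq]
        _ = ((∑ z, ‖ψ z‖ ^ 2 : ℝ) : ℂ) := by push_cast; rfl
    rw [h2, hnorm]
    norm_num
  obtain ⟨φ, hφnorm, hτφ⟩ := exists_rankone hpsd htr hent
  have hτφ' : ∀ i i', ∑ j, ψ (i, j) * (starRingEnd ℂ) (ψ (i', j))
      = φ i * (starRingEnd ℂ) (φ i') := by
    intro i i'
    rw [← hτ_apply, hτφ]
  have hfact := pure_reduced ψ φ hφnorm hτφ'
  set c : Fin n₂ × Fin m₂ → ℂ := fun j => ∑ k, (starRingEnd ℂ) (φ k) * ψ (k, j) with hc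
  have hψ : ∀ i j, ψ (i, j) = φ i * c j := hfact
  -- entries of ρ factorize
  set A : Matrix (Fin n₁) (Fin n₁) ℂ :=
    Matrix.of fun a a' => ∑ j₁, φ (a, j₁) * (starRingEnd ℂ) (φ (a', j₁)) with hA
  set B : Matrix (Fin n₂) (Fin n₂) ℂ :=
    Matrix.of fun b b' => ∑ j₂, c (b, j₂) * (starRingEnd ℂ) (c (b', j₂)) with hB
  have hρ_entry : ∀ a b a' b', ρ ((a, b)) ((a', b')) = A a a' * B b b' := by
    intro a b a' b'
    rw [← hpt]
    calc ptraceAnc (outerProd ψ) (a, b) (a', b')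
        = ∑ j₁, ∑ j₂, ψ ((a, j₁), (b, j₂)) * (starRingEnd ℂ) (ψ ((a', j₁), (b', j₂))) := by
          simp [ptraceAnc, outerProd, Matrix.vecMulVec_apply, Pi.star_apply, RCLike.star_def]
      _ = ∑ j₁, ∑ j₂, (φ (a, j₁) * (starRingEnd ℂ) (φ (a', j₁)))
            * (c (b, j₂) * (starRingEnd ℂ) (c (b', j₂))) := by
          refine Finset.sum_congr rfl fun j₁ _ => Finset.sum_congr rfl fun j₂ _ => ?_
          rw [hψ (a, j₁) (b, j₂), hψ (a', j₁) (b', j₂)]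
          simp only [map_mul]
          ring
      _ = A a a' * B b b' := by
          rw [hA, hB]
          simp only [Matrix.of_apply]
          rw [← Finset.sum_mul_sum]
  have hTr : A.trace * B.trace = 1 := by
    have h2 : ρ.trace = A.trace * B.trace := by
      rw [Matrix.trace, Matrix.trace, Matrix.trace, Fintype.sum_prod_type, Finset.sum_mul_sum]
      refine Finset.sum_congr rfl fun a _ => Finset.sum_congr rfl fun b _ => ?_
      rw [Matrix.diag_apply, hρ_entry a b a b]
      rfl
    rw [← h2, hρ.2]
  have hp2 : ∀ a a', ptrace₂ ρ a a' = A a a' * B.trace := by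
    intro a a'
    rw [ptrace₂, Matrix.trace]
    simp only [Matrix.of_apply]
    rw [Finset.mul_sum]
    exact Finset.sum_congr rfl fun b _ => hρ_entry a b a' b
  have hp1 : ∀ b b', ptrace₁ ρ b b' = A.trace * B b b' := by
    intro b b'
    rw [ptrace₁, Matrix.trace]
    simp only [Matrix.of_apply]
    rw [Finset.sum_mul]
    exact Finset.sum_congr rfl fun a _ => hρ_entry a b a b'
  ext ⟨a, b⟩ ⟨a', b'⟩
  rw [Matrix.kroneckerMap_apply, hp2 a a', hp1 b b', hρ_entry a b a' b']
  have : A a a' * B.trace * (A.trace * B b b') = (A a a' * B b b') * (A.trace * B.trace) := by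
    ring
  rw [this, hTr, mul_one]
end

section
/- The entanglement of purification is bounded above by the entanglement entropies of both marginals: for any density matrix ρ on ℂ^{n₁} ⊗ ℂ^{n₂} with reduced density matrices ρ₁ = Tr₂ ρ and ρ₂ = Tr₁ ρ, one has E_P(ρ) ≤ min(S(ρ₁), S(ρ₂)). -/
open scoped Kronecker ComplexOrder

open Polynomial Matrix
open scoped ComplexOrder

lemma my_eval_charpoly {m : Type*} [Fintype m] [DecidableEq m] (M : Matrix m m ℂ) (x : ℂ) :
    M.charpoly.eval x = (x • (1 : Matrix m m ℂ) - M).det := by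
  rw [Matrix.charpoly, ← Polynomial.coe_evalRingHom, RingHom.map_det]
  congr 1
  ext i j
  by_cases h : i = j
  · subst h
    simp [Matrix.charmatrix_apply_eq, Matrix.one_apply_eq]
  · simp [Matrix.charmatrix_apply_ne _ _ _ h, Matrix.one_apply_ne h]

lemma my_charpoly_eq_prod {m : Type*} [Fintype m] [DecidableEq m] {A : Matrix m m ℂ}
    (hA : A.IsHermitian) :
    A.charpoly = ∏ i, (X - C ((hA.eigenvalues i : ℂ))) := by
  apply Polynomial.funext; intro x
  rw [my_eval_charpoly]
  set U : Matrix m m ℂ := (Matrix.IsHermitian.eigenvectorUnitary hA : Matrix m m ℂ) with hU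
  have hU1 : U * star U = 1 :=
    (Matrix.mem_unitaryGroup_iff).mp (Matrix.IsHermitian.eigenvectorUnitary hA).2
  set D : Matrix m m ℂ := Matrix.diagonal (RCLike.ofReal ∘ hA.eigenvalues) with hD
  have key : x • (1 : Matrix m m ℂ) - A = U * (x • 1 - D) * star U := by
    have h2 : U * (x • (1 : Matrix m m ℂ)) * star U = x • (1 : Matrix m m ℂ) := by
      rw [mul_smul_comm, Matrix.mul_one, smul_mul_assoc, hU1]
    conv_lhs => rw [hA.spectral_theorem]
    rw [Unitary.conjStarAlgAut_apply, Matrix.mul_sub, Matrix.sub_mul, h2]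
  rw [key, Matrix.det_mul, Matrix.det_mul]
  have hdet : (U.det * (x • (1 : Matrix m m ℂ) - D).det) * (star U).det
      = (x • (1 : Matrix m m ℂ) - D).det := by
    rw [mul_comm U.det, mul_assoc, ← Matrix.det_mul, hU1, Matrix.det_one, mul_one]
  rw [hdet]
  have hdiag : x • (1 : Matrix m m ℂ) - D
      = Matrix.diagonal (fun i => x - (hA.eigenvalues i : ℂ)) := by
    ext i j
    by_cases h : i = j
    · subst h; simp [hD, Matrix.one_apply_eq, Matrix.diagonal_apply_eq]
    · simp [hD, Matrix.one_apply_ne h, Matrix.diagonal_apply_ne _ h]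
  rw [hdiag, Matrix.det_diagonal]
  simp [eval_prod]

lemma my_roots_charpoly {m : Type*} [Fintype m] [DecidableEq m] {A : Matrix m m ℂ}
    (hA : A.IsHermitian) :
    A.charpoly.roots = Finset.univ.val.map (fun i => ((hA.eigenvalues i : ℂ))) := by
  rw [my_charpoly_eq_prod hA, Finset.prod_eq_multiset_prod,
    show (fun i => X - C ((hA.eigenvalues i : ℂ))) =
      (fun z : ℂ => X - C z) ∘ (fun i => ((hA.eigenvalues i : ℂ))) from rfl,
    ← Multiset.map_map, roots_multiset_prod_X_sub_C]

lemma my_sum_eigenvalues {m : Type*} [Fintype m] [DecidableEq m] {A : Matrix m m ℂ}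
    (hA : A.IsHermitian) (htr : A.trace = 1) : ∑ i, hA.eigenvalues i = 1 := by
  have h := Matrix.trace_eq_sum_roots_charpoly A
  rw [my_roots_charpoly hA, htr] at h
  have : ((∑ i, hA.eigenvalues i : ℝ) : ℂ) = 1 := by
    rw [h, ← Finset.sum_eq_multiset_sum]
    push_cast
    rfl
  exact_mod_cast this

lemma vnEntropy_eq_multiset_sum {m : Type*} [Fintype m] [DecidableEq m] {A : Matrix m m ℂ}
    (hA : A.IsHermitian) :
    vnEntropy A = (A.charpoly.roots.map (fun z : ℂ => Real.negMulLog z.re)).sum := by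
  rw [vnEntropy, dif_pos hA, my_roots_charpoly hA, Multiset.map_map, Finset.sum_eq_multiset_sum]
  congr 1

lemma my_ent_eq {a b : Type*} [Fintype a] [DecidableEq a] [Fintype b] [DecidableEq b]
    {A : Matrix a a ℂ} {B : Matrix b b ℂ} (hA : A.IsHermitian) (hB : B.IsHermitian)
    (h : (X : ℂ[X]) ^ (Fintype.card b) * A.charpoly = X ^ (Fintype.card a) * B.charpoly) :
    vnEntropy A = vnEntropy B := by
  have hr := congrArg Polynomial.roots h
  rw [Polynomial.roots_mul (mul_ne_zero (pow_ne_zero _ Polynomial.X_ne_zero)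
      (Matrix.charpoly_monic A).ne_zero),
    Polynomial.roots_mul (mul_ne_zero (pow_ne_zero _ Polynomial.X_ne_zero)
      (Matrix.charpoly_monic B).ne_zero),
    Polynomial.roots_pow, Polynomial.roots_pow, Polynomial.roots_X] at hr
  have h2 := congrArg (fun s : Multiset ℂ => ((s.map (fun z : ℂ => Real.negMulLog z.re)).sum)) hr
  simp only [Multiset.map_add, Multiset.sum_add, Multiset.map_nsmul, Multiset.map_singleton,
    Complex.zero_re, Real.negMulLog_zero, Multiset.sum_nsmul, Multiset.sum_singleton,
    smul_zero, zero_add] at h2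
  rw [vnEntropy_eq_multiset_sum hA, vnEntropy_eq_multiset_sum hB]
  exact h2

lemma my_charpoly_transpose {a : Type*} [Fintype a] [DecidableEq a] (A : Matrix a a ℂ) :
    Aᵀ.charpoly = A.charpoly := by
  apply Polynomial.funext; intro x
  rw [my_eval_charpoly, my_eval_charpoly, ← Matrix.det_transpose (x • 1 - A),
    Matrix.transpose_sub, Matrix.transpose_smul, Matrix.transpose_one]

lemma my_charpoly_AAH {a b : Type*} [Fintype a] [DecidableEq a] [Fintype b] [DecidableEq b]
    (M : Matrix a b ℂ) :
    (X : ℂ[X]) ^ (Fintype.card b) * (M * Mᴴ).charpoly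
      = X ^ (Fintype.card a) * (Mᴴ * M).charpoly := by
  rw [← sub_eq_zero]
  apply Polynomial.eq_zero_of_infinite_isRoot
  apply Set.Infinite.mono (s := ({(0 : ℂ)}ᶜ : Set ℂ))
    ?_ ((Set.finite_singleton (0 : ℂ)).infinite_compl)
  intro x hx
  have hx0 : x ≠ 0 := by simpa using hx
  simp only [Set.mem_setOf_eq, Polynomial.IsRoot, eval_sub, eval_mul, eval_pow, eval_X,
    my_eval_charpoly]
  have e1 : x • (1 : Matrix a a ℂ) - M * Mᴴ = x • ((1 : Matrix a a ℂ) - (x⁻¹ • M) * Mᴴ) := by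
    rw [smul_sub, Matrix.smul_mul, smul_smul, mul_inv_cancel₀ hx0, one_smul]
  have e2 : x • (1 : Matrix b b ℂ) - Mᴴ * M = x • ((1 : Matrix b b ℂ) - Mᴴ * (x⁻¹ • M)) := by
    rw [smul_sub, Matrix.mul_smul, smul_smul, mul_inv_cancel₀ hx0, one_smul]
  rw [e1, e2, Matrix.det_smul, Matrix.det_smul, Matrix.det_one_sub_mul_comm]
  ring

lemma my_ptrace₂_outerProd {α β : Type*} [Fintype β] (ψ : α × β → ℂ) :
    ptrace₂ (outerProd ψ) =
      (Matrix.of fun (i : α) (j : β) => ψ (i, j)) *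
        (Matrix.of fun (i : α) (j : β) => ψ (i, j))ᴴ := by
  ext i i'
  simp [ptrace₂, outerProd, Matrix.mul_apply, Matrix.vecMulVec_apply,
    Matrix.conjTranspose_apply]

lemma my_isHermitian_ptrace₂ {α β : Type*} [Fintype β] {σ : Matrix (α × β) (α × β) ℂ}
    (h : σ.IsHermitian) : (ptrace₂ σ).IsHermitian := by
  refine Matrix.IsHermitian.ext fun i j => ?_
  simp only [ptrace₂, Matrix.of_apply]
  rw [star_sum]
  exact Finset.sum_congr rfl fun k _ => h.apply _ _

lemma my_isHermitian_ptrace₁ {α β : Type*} [Fintype α] {σ : Matrix (α × β) (α × β) ℂ}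
    (h : σ.IsHermitian) : (ptrace₁ σ).IsHermitian := by
  refine Matrix.IsHermitian.ext fun i j => ?_
  simp only [ptrace₁, Matrix.of_apply]
  rw [star_sum]
  exact Finset.sum_congr rfl fun k _ => h.apply _ _

lemma my_trace_ptrace₂_outerProd {α β : Type*} [Fintype α] [Fintype β] (ψ : α × β → ℂ)
    (h : ∑ z, ‖ψ z‖ ^ 2 = 1) : (ptrace₂ (outerProd ψ)).trace = 1 := by
  have h1 : (ptrace₂ (outerProd ψ)).trace = ∑ z : α × β, ((‖ψ z‖ : ℂ)) ^ 2 := by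
    rw [Matrix.trace, Fintype.sum_prod_type]
    refine Finset.sum_congr rfl fun i _ => Finset.sum_congr rfl fun j _ => ?_
    simp only [Matrix.diag, ptrace₂, outerProd, Matrix.of_apply, Matrix.vecMulVec_apply,
      Pi.star_apply, RCLike.star_def, RCLike.mul_conj]
    norm_cast
  rw [h1]
  have h2 : ∑ z : α × β, ((‖ψ z‖ : ℂ)) ^ 2 = ((∑ z : α × β, ‖ψ z‖ ^ 2 : ℝ) : ℂ) := by
    push_cast; rfl
  rw [h2, h, Complex.ofReal_one]

lemma my_vnEntropy_nonneg {d : Type*} [Fintype d] [DecidableEq d] {A : Matrix d d ℂ}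
    (hP : A.PosSemidef) (htr : A.trace = 1) : 0 ≤ vnEntropy A := by
  rw [vnEntropy, dif_pos hP.1]
  have hsum := my_sum_eigenvalues hP.1 htr
  refine Finset.sum_nonneg fun i _ => Real.negMulLog_nonneg (hP.eigenvalues_nonneg i) ?_
  calc hP.1.eigenvalues i ≤ ∑ j, hP.1.eigenvalues j :=
        Finset.single_le_sum (fun j _ => hP.eigenvalues_nonneg j) (Finset.mem_univ i)
    _ = 1 := hsum

noncomputable def purif₁ {n₁ n₂ : ℕ} (S : Matrix (Fin n₁ × Fin n₂) (Fin n₁ × Fin n₂) ℂ) :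
    (Fin n₁ × Fin 1) × (Fin n₂ × Fin (n₁ * n₂)) → ℂ :=
  fun z => S (z.1.1, z.2.1) (finProdFinEquiv.symm z.2.2)

noncomputable def purif₂ {n₁ n₂ : ℕ} (S : Matrix (Fin n₁ × Fin n₂) (Fin n₁ × Fin n₂) ℂ) :
    (Fin n₁ × Fin (n₁ * n₂)) × (Fin n₂ × Fin 1) → ℂ :=
  fun z => S (z.1.1, z.2.1) (finProdFinEquiv.symm z.1.2)

section purif
variable {n₁ n₂ : ℕ} {S ρ : Matrix (Fin n₁ × Fin n₂) (Fin n₁ × Fin n₂) ℂ}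
  (key : ∀ x y, ∑ u, S x u * star (S y u) = ρ x y)

include key

lemma purif₁_norm (hsum : ∑ x, (ρ x x).re = 1) : ∑ z, ‖purif₁ S z‖ ^ 2 = 1 := by
  have keyRe : ∀ x, ∑ u, ‖S x u‖ ^ 2 = (ρ x x).re := by
    intro x
    have h2 : ((∑ u, ‖S x u‖ ^ 2 : ℝ) : ℂ) = ρ x x := by
      rw [← key x x]
      push_cast
      exact Finset.sum_congr rfl fun u _ => (RCLike.mul_conj _).symm
    rw [← h2, Complex.ofReal_re]
  calc ∑ z : (Fin n₁ × Fin 1) × (Fin n₂ × Fin (n₁ * n₂)), ‖purif₁ S z‖ ^ 2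
      = ∑ i : Fin n₁, ∑ j : Fin 1, ∑ a : Fin n₂, ∑ k : Fin (n₁ * n₂),
          ‖S (i, a) (finProdFinEquiv.symm k)‖ ^ 2 := by
        simp only [Fintype.sum_prod_type]; rfl
    _ = ∑ i : Fin n₁, ∑ a : Fin n₂, ∑ k : Fin (n₁ * n₂),
          ‖S (i, a) (finProdFinEquiv.symm k)‖ ^ 2 := by
        simp
    _ = ∑ i : Fin n₁, ∑ a : Fin n₂, ∑ u : Fin n₁ × Fin n₂, ‖S (i, a) u‖ ^ 2 := by
        refine Finset.sum_congr rfl fun i _ => Finset.sum_congr rfl fun a _ => ?_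
        exact Equiv.sum_comp finProdFinEquiv.symm (fun u => ‖S (i, a) u‖ ^ 2)
    _ = ∑ x : Fin n₁ × Fin n₂, (ρ x x).re := by
        rw [Fintype.sum_prod_type]
        exact Finset.sum_congr rfl fun i _ => Finset.sum_congr rfl fun a _ => keyRe (i, a)
    _ = 1 := hsum

lemma purif₂_norm (hsum : ∑ x, (ρ x x).re = 1) : ∑ z, ‖purif₂ S z‖ ^ 2 = 1 := by
  have keyRe : ∀ x, ∑ u, ‖S x u‖ ^ 2 = (ρ x x).re := by
    intro x
    have h2 : ((∑ u, ‖S x u‖ ^ 2 : ℝ) : ℂ) = ρ x x := by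
      rw [← key x x]
      push_cast
      exact Finset.sum_congr rfl fun u _ => (RCLike.mul_conj _).symm
    rw [← h2, Complex.ofReal_re]
  calc ∑ z : (Fin n₁ × Fin (n₁ * n₂)) × (Fin n₂ × Fin 1), ‖purif₂ S z‖ ^ 2
      = ∑ i : Fin n₁, ∑ k : Fin (n₁ * n₂), ∑ a : Fin n₂, ∑ j : Fin 1,
          ‖S (i, a) (finProdFinEquiv.symm k)‖ ^ 2 := by
        simp only [Fintype.sum_prod_type]; rfl
    _ = ∑ i : Fin n₁, ∑ k : Fin (n₁ * n₂), ∑ a : Fin n₂,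
          ‖S (i, a) (finProdFinEquiv.symm k)‖ ^ 2 := by
        simp
    _ = ∑ i : Fin n₁, ∑ a : Fin n₂, ∑ k : Fin (n₁ * n₂),
          ‖S (i, a) (finProdFinEquiv.symm k)‖ ^ 2 := by
        refine Finset.sum_congr rfl fun i _ => ?_
        rw [Finset.sum_comm]
    _ = ∑ i : Fin n₁, ∑ a : Fin n₂, ∑ u : Fin n₁ × Fin n₂, ‖S (i, a) u‖ ^ 2 := by
        refine Finset.sum_congr rfl fun i _ => Finset.sum_congr rfl fun a _ => ?_
        exact Equiv.sum_comp finProdFinEquiv.symm (fun u => ‖S (i, a) u‖ ^ 2)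
    _ = ∑ x : Fin n₁ × Fin n₂, (ρ x x).re := by
        rw [Fintype.sum_prod_type]
        exact Finset.sum_congr rfl fun i _ => Finset.sum_congr rfl fun a _ => keyRe (i, a)
    _ = 1 := hsum

lemma purif₁_red : ptraceAnc (outerProd (purif₁ S)) = ρ := by
  ext p q
  simp only [ptraceAnc, Matrix.of_apply, outerProd, Matrix.vecMulVec_apply, Pi.star_apply]
  rw [Fin.sum_univ_one]
  have := (Equiv.sum_comp finProdFinEquiv.symm
    (fun u => S p u * star (S q u))).trans (key p q)
  simpa [purif₁] using this

lemma purif₂_red : ptraceAnc (outerProd (purif₂ S)) = ρ := by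
  ext p q
  simp only [ptraceAnc, Matrix.of_apply, outerProd, Matrix.vecMulVec_apply, Pi.star_apply]
  have := (Equiv.sum_comp finProdFinEquiv.symm
    (fun u => S p u * star (S q u))).trans (key p q)
  simpa [purif₂, Fin.sum_univ_one] using this

lemma purif₁_marg : ptrace₂ (outerProd (purif₁ S)) =
    (ptrace₂ ρ).submatrix (fun p : Fin n₁ × Fin 1 => p.1) (fun p => p.1) := by
  ext x x'
  simp only [ptrace₂, Matrix.of_apply, outerProd, Matrix.vecMulVec_apply, Pi.star_apply,
    Matrix.submatrix_apply]
  rw [Fintype.sum_prod_type]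
  refine Finset.sum_congr rfl fun a _ => ?_
  exact (Equiv.sum_comp finProdFinEquiv.symm
    fun u => S (x.1, a) u * star (S (x'.1, a) u)).trans (key _ _)

lemma purif₂_margH :
    (Matrix.of fun (x : Fin n₁ × Fin (n₁ * n₂)) (y : Fin n₂ × Fin 1) => purif₂ S (x, y))ᴴ *
      (Matrix.of fun (x : Fin n₁ × Fin (n₁ * n₂)) (y : Fin n₂ × Fin 1) => purif₂ S (x, y)) =
    ((ptrace₁ ρ)ᵀ).submatrix (fun p : Fin n₂ × Fin 1 => p.1) (fun p => p.1) := by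
  ext y y'
  simp only [Matrix.mul_apply, Matrix.conjTranspose_apply, Matrix.of_apply,
    Matrix.submatrix_apply, Matrix.transpose_apply, ptrace₁]
  rw [Fintype.sum_prod_type]
  refine Finset.sum_congr rfl fun i _ => ?_
  have h := (Equiv.sum_comp finProdFinEquiv.symm
    fun u => S (i, y'.1) u * star (S (i, y.1) u)).trans (key _ _)
  calc ∑ k : Fin (n₁ * n₂), star (purif₂ S ((i, k), y)) * purif₂ S ((i, k), y')
      = ∑ k : Fin (n₁ * n₂), S (i, y'.1) (finProdFinEquiv.symm k) *
          star (S (i, y.1) (finProdFinEquiv.symm k)) := by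
        refine Finset.sum_congr rfl fun k _ => ?_
        simp [purif₂, mul_comm]
    _ = ρ (i, y'.1) (i, y.1) := h

end purif


/-- The entanglement of purification is bounded above by the entanglement
entropies of both marginals. -/
theorem entPurification_le_min_marginal_entropies {n₁ n₂ : ℕ}
    (ρ : Matrix (Fin n₁ × Fin n₂) (Fin n₁ × Fin n₂) ℂ) (hρ : IsDensityMatrix ρ) :
    entPurification ρ ≤ min (vnEntropy (ptrace₂ ρ)) (vnEntropy (ptrace₁ ρ)) := by
  classical
  obtain ⟨hpsd, htr⟩ := hρ
  have hherm : ρ.IsHermitian := hpsd.1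
  have hne : Nonempty (Fin n₁ × Fin n₂) := by
    by_contra h
    rw [not_nonempty_iff] at h
    rw [Matrix.trace, Fintype.sum_empty] at htr
    exact zero_ne_one htr
  have hN : 1 ≤ n₁ * n₂ := by
    have h1 : 0 < Fintype.card (Fin n₁ × Fin n₂) := Fintype.card_pos
    rwa [Fintype.card_prod, Fintype.card_fin, Fintype.card_fin] at h1
  obtain ⟨B, hB⟩ : ∃ B : Matrix (Fin n₁ × Fin n₂) (Fin n₁ × Fin n₂) ℂ, ρ = star B * B := by
    open scoped MatrixOrder in exact CStarAlgebra.nonneg_iff_eq_star_mul_self.mp hpsd.nonneg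
  set S := Bᴴ with hSdef
  have key : ∀ x y, ∑ u, S x u * star (S y u) = ρ x y := by
    intro x y
    have h1 : (S * Sᴴ) x y = ρ x y := by
      rw [hSdef, Matrix.conjTranspose_conjTranspose, hB]; rfl
    rw [← h1, Matrix.mul_apply]
    exact Finset.sum_congr rfl fun u _ => by rw [Matrix.conjTranspose_apply]
  have hsum : ∑ x, (ρ x x).re = 1 := by
    have h := congrArg Complex.re htr
    rw [Matrix.trace] at h
    simpa [Complex.re_sum, Matrix.diag] using h
  -- bounded below
  have hbdd : BddBelow {x : ℝ | ∃ (m₁ m₂ : ℕ), 1 ≤ m₁ ∧ 1 ≤ m₂ ∧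
      ∃ ψ : (Fin n₁ × Fin m₁) × (Fin n₂ × Fin m₂) → ℂ,
        (∑ z, ‖ψ z‖ ^ 2 = 1) ∧ ptraceAnc (outerProd ψ) = ρ ∧
        x = vnEntropy (ptrace₂ (outerProd ψ))} := by
    refine ⟨0, fun x hx => ?_⟩
    obtain ⟨m₁, m₂, -, -, ψ, hnorm, -, hxe⟩ := hx
    rw [hxe]
    refine my_vnEntropy_nonneg ?_ (my_trace_ptrace₂_outerProd ψ hnorm)
    rw [my_ptrace₂_outerProd]
    exact Matrix.posSemidef_self_mul_conjTranspose _
  -- first marginal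
  have hH₂ : (ptrace₂ ρ).IsHermitian := my_isHermitian_ptrace₂ hherm
  have hH₁ : (ptrace₁ ρ).IsHermitian := my_isHermitian_ptrace₁ hherm
  have hent1 : vnEntropy (ptrace₂ ρ) = vnEntropy (ptrace₂ (outerProd (purif₁ S))) := by
    have hmarg := purif₁_marg key
    have hH2 : (ptrace₂ (outerProd (purif₁ S))).IsHermitian := by
      rw [hmarg]; exact hH₂.submatrix _
    refine my_ent_eq hH₂ hH2 ?_
    have hcp : (ptrace₂ (outerProd (purif₁ S))).charpoly = (ptrace₂ ρ).charpoly := by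
      rw [hmarg]
      have hre : (ptrace₂ ρ).submatrix (fun p : Fin n₁ × Fin 1 => p.1) (fun p => p.1)
          = Matrix.reindex (Equiv.prodUnique (Fin n₁) (Fin 1)).symm
              (Equiv.prodUnique (Fin n₁) (Fin 1)).symm (ptrace₂ ρ) := rfl
      rw [hre, Matrix.charpoly_reindex]
    rw [hcp]
    have hc : Fintype.card (Fin n₁ × Fin 1) = Fintype.card (Fin n₁) := by simp
    rw [hc]
  have mem1 : vnEntropy (ptrace₂ ρ) ∈ {x : ℝ | ∃ (m₁ m₂ : ℕ), 1 ≤ m₁ ∧ 1 ≤ m₂ ∧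
      ∃ ψ : (Fin n₁ × Fin m₁) × (Fin n₂ × Fin m₂) → ℂ,
        (∑ z, ‖ψ z‖ ^ 2 = 1) ∧ ptraceAnc (outerProd ψ) = ρ ∧
        x = vnEntropy (ptrace₂ (outerProd ψ))} :=
    ⟨1, n₁ * n₂, le_refl 1, hN, purif₁ S, purif₁_norm key hsum, purif₁_red key, hent1⟩
  -- second marginal
  have hent2 : vnEntropy (ptrace₁ ρ) = vnEntropy (ptrace₂ (outerProd (purif₂ S))) := by
    set M₂ : Matrix (Fin n₁ × Fin (n₁ * n₂)) (Fin n₂ × Fin 1) ℂ :=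
      Matrix.of fun x y => purif₂ S (x, y) with hM₂
    have hmarg : ptrace₂ (outerProd (purif₂ S)) = M₂ * M₂ᴴ := my_ptrace₂_outerProd _
    have hPSD : (M₂ * M₂ᴴ).PosSemidef := Matrix.posSemidef_self_mul_conjTranspose M₂
    have hHA : (ptrace₂ (outerProd (purif₂ S))).IsHermitian := by
      rw [hmarg]; exact hPSD.1
    refine my_ent_eq hH₁ hHA ?_
    rw [hmarg]
    have h1 := my_charpoly_AAH M₂
    have h2 : (M₂ᴴ * M₂).charpoly = (ptrace₁ ρ).charpoly := by
      rw [hM₂, purif₂_margH key]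
      have hre : ((ptrace₁ ρ)ᵀ).submatrix (fun p : Fin n₂ × Fin 1 => p.1) (fun p => p.1)
          = Matrix.reindex (Equiv.prodUnique (Fin n₂) (Fin 1)).symm
              (Equiv.prodUnique (Fin n₂) (Fin 1)).symm ((ptrace₁ ρ)ᵀ) := rfl
      rw [hre, Matrix.charpoly_reindex, my_charpoly_transpose]
    rw [h2] at h1
    have hc : Fintype.card (Fin n₂ × Fin 1) = Fintype.card (Fin n₂) := by simp
    rw [hc] at h1
    exact h1.symm
  have mem2 : vnEntropy (ptrace₁ ρ) ∈ {x : ℝ | ∃ (m₁ m₂ : ℕ), 1 ≤ m₁ ∧ 1 ≤ m₂ ∧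
      ∃ ψ : (Fin n₁ × Fin m₁) × (Fin n₂ × Fin m₂) → ℂ,
        (∑ z, ‖ψ z‖ ^ 2 = 1) ∧ ptraceAnc (outerProd ψ) = ρ ∧
        x = vnEntropy (ptrace₂ (outerProd ψ))} :=
    ⟨n₁ * n₂, 1, hN, le_refl 1, purif₂ S, purif₂_norm key hsum, purif₂_red key, hent2⟩
  rw [entPurification]
  exact le_min (csInf_le hbdd mem1) (csInf_le hbdd mem2)
end
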